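/- Fix ξ' = (ξ₁,ξ₂) ∈ ℝ² and μ ∈ ℝ, let ρ = √(ξ₁²+ξ₂²+μ²), ς = ξ₁ + iξ₂, and define h₁ = (iμ, 0, −iρ, ς) ∈ ℂ⁴ and h₂ = (conj(ς), iρ, 0, iμ) ∈ ℂ⁴. Then h₁ and h₂ are orthogonal with respect to the standard Hermitian inner product on ℂ⁴, both satisfy Θ₋ h = 0 where Θ₋ = [[−iμ I₂, Λ],[Λ, −iμ I₂]] with Λ = ξ₁σ₁ + ξ₂σ₂ − iρσ₃, and if (ξ',μ) ≠ (0,0) they form a basis of the kernel of Θ₋. -/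

import Mathlib

open Matrix Complex

/-- The Pauli matrix σ₁. -/
noncomputable def σ1 : Matrix (Fin 2) (Fin 2) ℂ := !![0, 1; 1, 0]
/-- The Pauli matrix σ₂. -/
noncomputable def σ2 : Matrix (Fin 2) (Fin 2) ℂ := !![0, -Complex.I; Complex.I, 0]
/-- The Pauli matrix σ₃. -/
noncomputable def σ3 : Matrix (Fin 2) (Fin 2) ℂ := !![1, 0; 0, -1]

/-- The Dirac matrix α₀ = [[I₂,0],[0,-I₂]]. -/
noncomputable def α0 : Matrix (Fin 4) (Fin 4) ℂ :=
  !![1, 0, 0, 0; 0, 1, 0, 0; 0, 0, -1, 0; 0, 0, 0, -1]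
/-- The Dirac matrix α₁ = [[0,σ₁],[σ₁,0]]. -/
noncomputable def α1 : Matrix (Fin 4) (Fin 4) ℂ :=
  !![0, 0, 0, 1; 0, 0, 1, 0; 0, 1, 0, 0; 1, 0, 0, 0]
/-- The Dirac matrix α₂ = [[0,σ₂],[σ₂,0]]. -/
noncomputable def α2 : Matrix (Fin 4) (Fin 4) ℂ :=
  !![0, 0, 0, -Complex.I; 0, 0, Complex.I, 0;
     0, -Complex.I, 0, 0; Complex.I, 0, 0, 0]
/-- The Dirac matrix α₃ = [[0,σ₃],[σ₃,0]]. -/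
noncomputable def α3 : Matrix (Fin 4) (Fin 4) ℂ :=
  !![0, 0, 1, 0; 0, 0, 0, -1; 1, 0, 0, 0; 0, -1, 0, 0]

/-- Assemble a 4×4 matrix from four 2×2 blocks. -/
noncomputable def blockMat (A B C D : Matrix (Fin 2) (Fin 2) ℂ) :
    Matrix (Fin 4) (Fin 4) ℂ :=
  Matrix.reindex finSumFinEquiv finSumFinEquiv (Matrix.fromBlocks A B C D)

lemma blockMat_eq' (A B C D : Matrix (Fin 2) (Fin 2) ℂ) : blockMat A B C D =
    !![A 0 0, A 0 1, B 0 0, B 0 1;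
       A 1 0, A 1 1, B 1 0, B 1 1;
       C 0 0, C 0 1, D 0 0, D 0 1;
       C 1 0, C 1 1, D 1 0, D 1 1] := by
  ext i j
  fin_cases i <;> fin_cases j <;>
    simp [blockMat, Matrix.fromBlocks] <;> rfl

/-- For ξ' ∈ ℝ², μ ∈ ℝ, ρ = √(|ξ'|²+μ²), ς = ξ₁+iξ₂, the vectors
h₁ = (iμ,0,−iρ,ς) and h₂ = (conj ς, iρ, 0, iμ) are orthogonal, satisfy
Θ₋ h = 0 for Θ₋ = [[−iμI₂,Λ],[Λ,−iμI₂]], Λ = ξ₁σ₁+ξ₂σ₂−iρσ₃, and if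
(ξ',μ) ≠ 0 they form a basis of ker Θ₋. -/
theorem kernel_basis_h1_h2 (ξ1 ξ2 μ : ℝ) :
    let ρ : ℝ := Real.sqrt (ξ1 ^ 2 + ξ2 ^ 2 + μ ^ 2)
    let ς : ℂ := (ξ1 : ℂ) + Complex.I * (ξ2 : ℂ)
    let Λ : Matrix (Fin 2) (Fin 2) ℂ :=
      (ξ1 : ℂ) • σ1 + (ξ2 : ℂ) • σ2 - (Complex.I * (ρ : ℂ)) • σ3
    let Θm : Matrix (Fin 4) (Fin 4) ℂ :=
      blockMat ((-(Complex.I * (μ : ℂ))) • 1) Λ Λ ((-(Complex.I * (μ : ℂ))) • 1)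
    let h1 : Fin 4 → ℂ := ![Complex.I * (μ : ℂ), 0, -(Complex.I * (ρ : ℂ)), ς]
    let h2 : Fin 4 → ℂ := ![starRingEnd ℂ ς, Complex.I * (ρ : ℂ), 0, Complex.I * (μ : ℂ)]
    (star h2) ⬝ᵥ h1 = 0 ∧ Θm.mulVec h1 = 0 ∧ Θm.mulVec h2 = 0 ∧
      ((ξ1, ξ2, μ) ≠ (0, 0, 0) →
        LinearIndependent ℂ ![h1, h2] ∧
        Submodule.span ℂ {h1, h2} = LinearMap.ker Θm.mulVecLin) := by
  intro ρ ς Λ Θm h1 h2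
  have hI := Complex.I_sq
  have hρ2' : (ρ : ℝ) ^ 2 = ξ1 ^ 2 + ξ2 ^ 2 + μ ^ 2 := Real.sq_sqrt (by positivity)
  have hρ2 : (ρ : ℂ) ^ 2 = (ξ1 : ℂ) ^ 2 + (ξ2 : ℂ) ^ 2 + (μ : ℂ) ^ 2 := by
    exact_mod_cast congrArg (Complex.ofReal ·) hρ2'
  have hΘ : Θm = !![-(Complex.I*μ), 0, -(Complex.I*ρ), (ξ1:ℂ) - Complex.I*ξ2;
      0, -(Complex.I*μ), (ξ1:ℂ) + Complex.I*ξ2, Complex.I*ρ;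
      -(Complex.I*ρ), (ξ1:ℂ) - Complex.I*ξ2, -(Complex.I*μ), 0;
      (ξ1:ℂ) + Complex.I*ξ2, Complex.I*ρ, 0, -(Complex.I*μ)] := by
    show blockMat _ _ _ _ = _
    rw [blockMat_eq']
    congr 1 <;> simp [Λ, σ1, σ2, σ3, Matrix.one_apply] <;> ring_nf <;> simp
  have hςc : starRingEnd ℂ ς = (ξ1:ℂ) - Complex.I*ξ2 := by
    simp [ς, Complex.conj_ofReal]; ring
  have hker1 : Θm.mulVec h1 = 0 := by
    funext i
    fin_cases i
    · simp [Matrix.mulVec, dotProduct, Fin.sum_univ_four, hΘ, h1, ς]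
      linear_combination ((ρ:ℂ)^2-(μ:ℂ)^2-(ξ2:ℂ)^2)*hI - hρ2
    · simp [Matrix.mulVec, dotProduct, Fin.sum_univ_four, hΘ, h1, ς]
      ring
    · simp [Matrix.mulVec, dotProduct, Fin.sum_univ_four, hΘ, h1, ς]
      ring
    · simp [Matrix.mulVec, dotProduct, Fin.sum_univ_four, hΘ, h1, ς]
      ring
  have hker2 : Θm.mulVec h2 = 0 := by
    funext i
    fin_cases i
    · simp [Matrix.mulVec, dotProduct, Fin.sum_univ_four, hΘ, h2, hςc]
      ring
    · simp [Matrix.mulVec, dotProduct, Fin.sum_univ_four, hΘ, h2, hςc]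
      ring
    · simp [Matrix.mulVec, dotProduct, Fin.sum_univ_four, hΘ, h2, hςc]
      ring
    · simp [Matrix.mulVec, dotProduct, Fin.sum_univ_four, hΘ, h2, hςc]
      linear_combination ((ρ:ℂ)^2-(μ:ℂ)^2-(ξ2:ℂ)^2)*hI - hρ2
  refine ⟨?_, hker1, hker2, ?_⟩
  · simp [dotProduct, Fin.sum_univ_four, h1, h2, hςc, ς, Complex.conj_ofReal]
    ring
  · intro hne
    have hsum : 0 < ξ1 ^ 2 + ξ2 ^ 2 + μ ^ 2 := by
      have h : ξ1 ≠ 0 ∨ ξ2 ≠ 0 ∨ μ ≠ 0 := by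
        by_contra h
        push_neg at h
        exact hne (by simp [h.1, h.2.1, h.2.2])
      rcases h with h | h | h <;>
        nlinarith [pow_two_pos_of_ne_zero h, sq_nonneg ξ1, sq_nonneg ξ2, sq_nonneg μ]
    have hρpos : 0 < ρ := Real.sqrt_pos.mpr hsum
    have hρC : (ρ : ℂ) ≠ 0 := by exact_mod_cast hρpos.ne'
    have h2ρ : (2 : ℂ) * (ρ:ℂ) ^ 2 ≠ 0 := by
      simp [hρC]
    constructor
    · rw [linearIndependent_fin2]
      refine ⟨fun h => ?_, fun a h => ?_⟩
      · have h' : Complex.I * (ρ:ℂ) = 0 := by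
          simpa [h2] using congrFun h 1
        rcases mul_eq_zero.mp h' with h'' | h''
        · exact Complex.I_ne_zero h''
        · exact hρC h''
      · have h' : a * 0 = -(Complex.I * (ρ:ℂ)) := by
          simpa [h1, h2] using congrFun h 2
        rw [mul_zero, eq_comm, neg_eq_zero] at h'
        rcases mul_eq_zero.mp h' with h'' | h''
        · exact Complex.I_ne_zero h''
        · exact hρC h''
    · apply le_antisymm
      · rw [Submodule.span_le]
        rintro z hz
        simp only [Set.mem_insert_iff, Set.mem_singleton_iff] at hz
        rcases hz with rfl | rfl
        · simpa [LinearMap.mem_ker, Matrix.mulVecLin_apply] using hker1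
        · simpa [LinearMap.mem_ker, Matrix.mulVecLin_apply] using hker2
      · intro v hv
        rw [LinearMap.mem_ker, Matrix.mulVecLin_apply] at hv
        have e0 := congrFun hv 0
        have e1 := congrFun hv 1
        have e2 := congrFun hv 2
        have e3 := congrFun hv 3
        simp [hΘ, Matrix.mulVec, dotProduct, Fin.sum_univ_four] at e0 e1 e2 e3
        set α : ℂ := (-(Complex.I*μ)) * v 0 + (Complex.I*ρ) * v 2 + ((ξ1:ℂ) - Complex.I*ξ2) * v 3 with hα
        set β : ℂ := ((ξ1:ℂ) + Complex.I*ξ2) * v 0 + (-(Complex.I*ρ)) * v 1 + (-(Complex.I*μ)) * v 3 with hβ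
        have k0 : 2*(ρ:ℂ)^2 * v 0 = α * (Complex.I*μ) + β * ((ξ1:ℂ) - Complex.I*ξ2) := by
          linear_combination (Complex.I*(μ:ℂ))*hα + ((ξ1:ℂ)-Complex.I*ξ2)*hβ + (Complex.I*ρ) * e2 + (v 0 * ((μ:ℂ)^2+ξ2^2+ρ^2)) * hI + (v 0) * hρ2
        have k1 : 2*(ρ:ℂ)^2 * v 1 = β * (Complex.I*ρ) := by
          linear_combination (Complex.I*(ρ:ℂ))*hβ + (-(Complex.I*ρ)) * e3 + (2*(ρ:ℂ)^2 * v 1) * hI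
        have k2 : 2*(ρ:ℂ)^2 * v 2 = α * (-(Complex.I*ρ)) := by
          linear_combination (-(Complex.I*(ρ:ℂ)))*hα + (Complex.I*ρ) * e0 + (2*(ρ:ℂ)^2 * v 2) * hI
        have k3 : 2*(ρ:ℂ)^2 * v 3 = α * ((ξ1:ℂ) + Complex.I*ξ2) + β * (Complex.I*μ) := by
          linear_combination ((ξ1:ℂ)+Complex.I*ξ2)*hα + (Complex.I*(μ:ℂ))*hβ + (-(Complex.I*ρ)) * e1 + (v 3 * ((ξ2:ℂ)^2+μ^2+ρ^2)) * hI + (v 3) * hρ2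
        rw [Submodule.mem_span_pair]
        have heq : α • h1 + β • h2 = (2*(ρ:ℂ)^2) • v := by
          funext i
          fin_cases i <;>
            simp [h1, h2, hςc] <;>
            first
              | linear_combination -k0
              | linear_combination -k1
              | linear_combination -k2
              | linear_combination -k3
        refine ⟨α / (2*(ρ:ℂ)^2), β / (2*(ρ:ℂ)^2), ?_⟩
        rw [div_eq_inv_mul, div_eq_inv_mul, ← smul_smul, ← smul_smul, ← smul_add, heq,
          smul_smul, inv_mul_cancel₀ h2ρ, one_smul]
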